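/- Let B_1, …, B_Q be dependences B_i(x) = A_i x + b_i whose linear parts all have the same null space: ker A_i = K for every i. Then the footprints of translated tiles are obtained by translations determined by a single source-space vector independent of the tile: for every δ ∈ ℤ^t there exists u ∈ E (namely the orthogonal projection of Σ_j δ_j·𝐧_j onto the orthogonal complement of K), independent of τ and of i, such that for all τ ∈ ℤ^t and all i ∈ {1, …, Q}, B_i⟨T(τ+δ)⟩ = (A_i u) +ᵥ B_i⟨T(τ)⟩. -/

import Mathlib

open RealInnerProductSpace Pointwise

/-- if all dependences `B i x = A i x + b i` have the same null space `K`,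
then for every offset `δ` there is a single source-space vector `u` (the orthogonal
projection of `∑ j, δ j • 𝐧 j` onto `Kᗮ`), independent of the tile `τ` and of the
dependence `i`, such that `B i ⟨T (τ+δ)⟩ = A i u +ᵥ B i ⟨T τ⟩` for all `τ` and `i`. -/
theorem same_kernel_common_translation
    (d t k Q : ℕ) (ht : t ≤ d)
    (n : Fin t → EuclideanSpace ℝ (Fin d)) (hn : LinearIndependent ℝ n)
    (s : Fin t → ℝ) (hs : ∀ j, 0 < s j)
    (N : Fin t → EuclideanSpace ℝ (Fin d))
    (hN : ∀ i j, ⟪N i, n j⟫ = if i = j then s j else 0)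
    (A : Fin Q → (EuclideanSpace ℝ (Fin d) →ₗ[ℝ] EuclideanSpace ℝ (Fin k)))
    (b : Fin Q → EuclideanSpace ℝ (Fin k))
    (K : Submodule ℝ (EuclideanSpace ℝ (Fin d)))
    (hK : ∀ i, LinearMap.ker (A i) = K)
    (T : (Fin t → ℤ) → Set (EuclideanSpace ℝ (Fin d)))
    (hT : ∀ τ, T τ = {x | ∀ j, s j * (τ j : ℝ) ≤ ⟪x, n j⟫ ∧ ⟪x, n j⟫ < s j * ((τ j : ℝ) + 1)}) :
    ∀ δ : Fin t → ℤ, ∃ u : EuclideanSpace ℝ (Fin d),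
      u = (Submodule.orthogonalProjectionOnto Kᗮ (∑ j, (δ j : ℝ) • N j) : EuclideanSpace ℝ (Fin d)) ∧
      ∀ (τ : Fin t → ℤ) (i : Fin Q),
        (fun x => A i x + b i) '' T (τ + δ) =
          A i u +ᵥ ((fun x => A i x + b i) '' T τ) := by

  intro δ
  set w : EuclideanSpace ℝ (Fin d) := ∑ j, (δ j : ℝ) • N j with hw
  refine ⟨(Submodule.orthogonalProjectionOnto Kᗮ w : EuclideanSpace ℝ (Fin d)), rfl, ?_⟩
  have hwn : ∀ j, ⟪w, n j⟫ = s j * (δ j : ℝ) := by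
    intro j
    rw [hw, sum_inner]
    have : ∀ i ∈ Finset.univ, ⟪(δ i : ℝ) • N i, n j⟫ =
        if i = j then (δ j : ℝ) * s j else 0 := by
      intro i _
      rw [real_inner_smul_left, hN]
      by_cases h : i = j <;> simp [h]
    rw [Finset.sum_congr rfl this, Finset.sum_ite_eq' Finset.univ j]
    simp [mul_comm]
  have hmemT : ∀ (τ : Fin t → ℤ) x, x ∈ T (τ + δ) ↔ x - w ∈ T τ := by
    intro τ x
    simp only [hT, Set.mem_setOf_eq]
    refine forall_congr' fun j => ?_
    rw [inner_sub_left, hwn]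
    simp only [Pi.add_apply]
    push_cast
    constructor <;> rintro ⟨h1, h2⟩ <;> constructor <;> nlinarith [h1, h2]
  intro τ i
  have hAw : A i ((Submodule.orthogonalProjectionOnto Kᗮ w : EuclideanSpace ℝ (Fin d))) = A i w := by
    have hmem : w - (Submodule.orthogonalProjectionOnto Kᗮ w : EuclideanSpace ℝ (Fin d)) ∈ Kᗮᗮ :=
      Submodule.sub_starProjection_mem_orthogonal (K := Kᗮ) w
    rw [Submodule.orthogonal_orthogonal] at hmem
    have hker : w - (Submodule.orthogonalProjectionOnto Kᗮ w : EuclideanSpace ℝ (Fin d)) ∈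
        LinearMap.ker (A i) := by rw [hK i]; exact hmem
    rw [LinearMap.mem_ker, map_sub, sub_eq_zero] at hker
    exact hker.symm
  ext y
  simp only [Set.mem_image, Set.mem_vadd_set]
  constructor
  · rintro ⟨x, hx, rfl⟩
    refine ⟨A i (x - w) + b i, ⟨x - w, (hmemT τ x).mp hx, rfl⟩, ?_⟩
    simp only [vadd_eq_add, hAw, map_sub]
    abel
  · rintro ⟨z, ⟨x, hx, rfl⟩, rfl⟩
    refine ⟨x + w, ?_, ?_⟩
    · rw [hmemT τ (x + w)]; simpa using hx
    · simp only [vadd_eq_add, hAw, map_add]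
      abel
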